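/- Let (U_i, V_i), i ≥ 1, be i.i.d. random vectors taking values in [0,1]² with E[U₁] = E[V₁] = 1/2 and Var(U₁) = Var(V₁) = 1/12, and set ρ_C := 12·E[(U₁ − 1/2)(V₁ − 1/2)]. For each n, let Û₁, …, Û_n and V̂₁, …, V̂_n be [0,1]-valued random variables (on the same probability space) such that (1/n)Σ_{i=1}^n |Û_i − U_i| → 0 in probability and (1/n)Σ_{i=1}^n |V̂_i − V_i| → 0 in probability. Then each of the following three estimators converges in probability to ρ_C as n → ∞: (i) the OLS slope ρ̂_C = Σ_i (Û_i − mean(Û))(V̂_i − mean(V̂)) / Σ_i (V̂_i − mean(V̂))², (ii) the sample correlation ρ̃_C = Σ_i (Û_i − mean(Û))(V̂_i − mean(V̂)) / √( Σ_i (Û_i − mean(Û))² · Σ_i (V̂_i − mean(V̂))² ), and (iii) the covariance form ρ̆_C = (12/n)Σ_i (Û_i − 1/2)(V̂_i − 1/2). -/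

import Mathlib

open MeasureTheory ProbabilityTheory Filter Topology

section Framework

variable {Ω : Type*} [MeasureSpace Ω] [IsProbabilityMeasure (ℙ : Measure Ω)]

/-- Convergence in probability (with strict-inequality exceptional sets). -/
def TP (X : ℕ → Ω → ℝ) (c : ℝ) : Prop :=
  ∀ ε > (0 : ℝ), Tendsto (fun n : ℕ => ℙ {ω | ε < |X n ω - c|}) atTop (𝓝 0)

lemma meas_tendsto_zero_mono {S T : ℕ → Set Ω} (h : ∀ n, S n ⊆ T n)
    (hT : Tendsto (fun n => ℙ (T n)) atTop (𝓝 0)) :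
    Tendsto (fun n => ℙ (S n)) atTop (𝓝 0) :=
  tendsto_of_tendsto_of_tendsto_of_le_of_le tendsto_const_nhds hT
    (fun _ => zero_le) (fun n => measure_mono (h n))

lemma meas_tendsto_zero_union {S A B : ℕ → Set Ω} (h : ∀ n, S n ⊆ A n ∪ B n)
    (hA : Tendsto (fun n => ℙ (A n)) atTop (𝓝 0))
    (hB : Tendsto (fun n => ℙ (B n)) atTop (𝓝 0)) :
    Tendsto (fun n => ℙ (S n)) atTop (𝓝 0) := by
  have hAB : Tendsto (fun n => ℙ (A n) + ℙ (B n)) atTop (𝓝 0) := by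
    simpa using hA.add hB
  exact tendsto_of_tendsto_of_tendsto_of_le_of_le tendsto_const_nhds hAB
    (fun _ => zero_le) (fun n => (measure_mono (h n)).trans (measure_union_le _ _))

lemma TP_congr {X Y : ℕ → Ω → ℝ} {c : ℝ} (h : ∀ n ω, X n ω = Y n ω) (hX : TP X c) :
    TP Y c := by
  intro ε hε
  have := hX ε hε
  convert this using 2 with n
  congr 1
  ext ω
  simp only [Set.mem_setOf_eq, h]

lemma TP_congr_c {X : ℕ → Ω → ℝ} {c c' : ℝ} (h : c = c') (hX : TP X c) : TP X c' := h ▸ hX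

lemma TP_const (c : ℝ) : TP (fun _ (_ : Ω) => c) c := by
  intro ε hε
  have h : {ω : Ω | ε < |c - c|} = ∅ := by
    ext ω; simp [sub_self, abs_zero, not_lt.mpr hε.le]
  have h2 : (fun _ : ℕ => ℙ {ω : Ω | ε < |c - c|}) = fun _ => 0 := by
    funext n; rw [h, measure_empty]
  rw [h2]; exact tendsto_const_nhds

lemma TP_comp2 {X Y : ℕ → Ω → ℝ} {a b : ℝ} (g : ℝ → ℝ → ℝ)
    (hg : ContinuousAt (fun p : ℝ × ℝ => g p.1 p.2) (a, b))
    (hX : TP X a) (hY : TP Y b) : TP (fun n ω => g (X n ω) (Y n ω)) (g a b) := by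
  intro ε hε
  obtain ⟨δ, hδ, hδ'⟩ := Metric.continuousAt_iff.mp hg ε hε
  refine meas_tendsto_zero_union (A := fun n => {ω | δ/2 < |X n ω - a|})
    (B := fun n => {ω | δ/2 < |Y n ω - b|}) ?_ (hX _ (by linarith)) (hY _ (by linarith))
  intro n ω hω
  simp only [Set.mem_setOf_eq] at hω
  simp only [Set.mem_union, Set.mem_setOf_eq]
  by_contra hc
  push_neg at hc
  obtain ⟨h1, h2⟩ := hc
  have hd : dist ((X n ω, Y n ω) : ℝ × ℝ) (a, b) < δ := by
    rw [Prod.dist_eq]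
    simp only [Real.dist_eq]
    exact max_lt (lt_of_le_of_lt h1 (by linarith)) (lt_of_le_of_lt h2 (by linarith))
  have hlt := hδ' hd
  simp only [Real.dist_eq] at hlt
  linarith

lemma TP_comp {X : ℕ → Ω → ℝ} {a : ℝ} (g : ℝ → ℝ) (hg : ContinuousAt g a) (hX : TP X a) :
    TP (fun n ω => g (X n ω)) (g a) := by
  have : ContinuousAt (fun p : ℝ × ℝ => g p.1) (a, (0:ℝ)) := hg.comp continuousAt_fst
  exact TP_comp2 (fun x _ => g x) this hX (TP_const 0)

lemma TP_add {X Y : ℕ → Ω → ℝ} {a b : ℝ} (hX : TP X a) (hY : TP Y b) :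
    TP (fun n ω => X n ω + Y n ω) (a + b) :=
  TP_comp2 (· + ·) continuous_add.continuousAt hX hY

lemma TP_mul {X Y : ℕ → Ω → ℝ} {a b : ℝ} (hX : TP X a) (hY : TP Y b) :
    TP (fun n ω => X n ω * Y n ω) (a * b) :=
  TP_comp2 (· * ·) continuous_mul.continuousAt hX hY

lemma TP_div {X Y : ℕ → Ω → ℝ} {a b : ℝ} (hb : b ≠ 0) (hX : TP X a) (hY : TP Y b) :
    TP (fun n ω => X n ω / Y n ω) (a / b) :=
  TP_comp2 (· / ·) (ContinuousAt.div continuousAt_fst continuousAt_snd hb) hX hY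

lemma TP_squeeze {X Y Z : ℕ → Ω → ℝ} {c : ℝ} (hX : TP X c) (hZ : TP Z 0)
    (hb : ∀ n ω, |Y n ω - X n ω| ≤ Z n ω) : TP Y c := by
  intro ε hε
  refine meas_tendsto_zero_union (A := fun n => {ω | ε/2 < |X n ω - c|})
    (B := fun n => {ω | ε/2 < |Z n ω - 0|}) ?_ (hX _ (by linarith)) (hZ _ (by linarith))
  intro n ω hω
  simp only [Set.mem_setOf_eq] at hω
  simp only [Set.mem_union, Set.mem_setOf_eq, sub_zero]
  by_contra hc
  push_neg at hc
  obtain ⟨h1, h2⟩ := hc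
  have h3 := hb n ω
  have h4 : Z n ω ≤ |Z n ω| := le_abs_self _
  have h5 : |Y n ω - c| ≤ |Y n ω - X n ω| + |X n ω - c| := abs_sub_le _ _ _
  linarith

lemma TP_of_ae {X : ℕ → Ω → ℝ} {c : ℝ} (hm : ∀ n, AEStronglyMeasurable (X n) ℙ)
    (h : ∀ᵐ ω ∂(ℙ : Measure Ω), Tendsto (fun n => X n ω) atTop (𝓝 c)) : TP X c := by
  have hTIM : TendstoInMeasure ℙ X atTop (fun _ => c) :=
    tendstoInMeasure_of_tendsto_ae hm h
  intro ε hε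
  refine meas_tendsto_zero_mono (T := fun n => {ω | ε ≤ dist (X n ω) c}) ?_ (tendstoInMeasure_iff_dist.mp hTIM ε hε)
  intro n ω hω
  simp only [Set.mem_setOf_eq, Real.dist_eq] at *
  exact hω.le

end Framework

section Arith

lemma abs_sub'' (x y : ℝ) : |x - y| ≤ |x| + |y| := by
  calc |x - y| = |x + -y| := by rw [sub_eq_add_neg]
  _ ≤ |x| + |-y| := abs_add_le _ _
  _ = |x| + |y| := by rw [abs_neg]

lemma abs_sub_le_one' {x y : ℝ} (hx : x ∈ Set.Icc (0:ℝ) 1) (hy : y ∈ Set.Icc (0:ℝ) 1) :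
    |x - y| ≤ 1 := by
  rw [abs_le]
  constructor
  · linarith [hx.1, hy.2]
  · linarith [hx.2, hy.1]

lemma avg_mem_Icc (n : ℕ) (f : ℕ → ℝ) (hf : ∀ i ∈ Finset.range n, f i ∈ Set.Icc (0:ℝ) 1) :
    (∑ i ∈ Finset.range n, f i) / n ∈ Set.Icc (0:ℝ) 1 := by
  rcases Nat.eq_zero_or_pos n with h | h
  · simp [h]
  have hn : (0:ℝ) < n := by exact_mod_cast h
  constructor
  · exact div_nonneg (Finset.sum_nonneg fun i hi => (hf i hi).1) hn.le
  · rw [div_le_one hn]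
    calc (∑ i ∈ Finset.range n, f i) ≤ ∑ _i ∈ Finset.range n, (1:ℝ) :=
          Finset.sum_le_sum fun i hi => (hf i hi).2
    _ = n := by simp

lemma abs_mul_sub_le {a b a' b' : ℝ} (hb : |b| ≤ 1) (ha' : |a'| ≤ 1) :
    |a * b - a' * b'| ≤ |a - a'| + |b - b'| := by
  have he : a * b - a' * b' = (a - a') * b + a' * (b - b') := by ring
  rw [he]
  calc |(a - a') * b + a' * (b - b')| ≤ |(a - a') * b| + |a' * (b - b')| := abs_add_le _ _
  _ = |a - a'| * |b| + |a'| * |b - b'| := by rw [abs_mul, abs_mul]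
  _ ≤ |a - a'| * 1 + 1 * |b - b'| := by
      nlinarith [abs_nonneg (a - a'), abs_nonneg (b - b'), abs_nonneg a', abs_nonneg b]
  _ = |a - a'| + |b - b'| := by ring

lemma avg_abs_sub_le (n : ℕ) (f g : ℕ → ℝ) :
    |(∑ i ∈ Finset.range n, f i)/n - (∑ i ∈ Finset.range n, g i)/n| ≤
      (∑ i ∈ Finset.range n, |f i - g i|)/n := by
  rw [div_sub_div_same, abs_div, Nat.abs_cast]
  gcongr
  rw [← Finset.sum_sub_distrib]
  exact Finset.abs_sum_le_sum_abs _ _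

lemma avg_prod_diff (n : ℕ) (a b a' b' e₁ e₂ : ℕ → ℝ) (cu cv : ℝ)
    (hcu : 0 ≤ cu) (hcv : 0 ≤ cv)
    (hb : ∀ i ∈ Finset.range n, |b i| ≤ 1) (ha' : ∀ i ∈ Finset.range n, |a' i| ≤ 1)
    (h1 : ∀ i ∈ Finset.range n, |a i - a' i| ≤ e₁ i + cu)
    (h2 : ∀ i ∈ Finset.range n, |b i - b' i| ≤ e₂ i + cv) :
    |(∑ i ∈ Finset.range n, a i * b i)/n - (∑ i ∈ Finset.range n, a' i * b' i)/n| ≤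
      (∑ i ∈ Finset.range n, e₁ i)/n + (∑ i ∈ Finset.range n, e₂ i)/n + cu + cv := by
  rcases Nat.eq_zero_or_pos n with h | h
  · simp [h]; linarith
  have hn : (0:ℝ) < n := by exact_mod_cast h
  have key : |∑ i ∈ Finset.range n, a i * b i - ∑ i ∈ Finset.range n, a' i * b' i|
      ≤ ∑ i ∈ Finset.range n, (e₁ i + e₂ i + (cu + cv)) := by
    rw [← Finset.sum_sub_distrib]
    refine (Finset.abs_sum_le_sum_abs _ _).trans (Finset.sum_le_sum fun i hi => ?_)
    have h3 := abs_mul_sub_le (a := a i) (b' := b' i) (hb i hi) (ha' i hi)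
    have h4 := h1 i hi
    have h5 := h2 i hi
    linarith
  have hsum : (∑ i ∈ Finset.range n, (e₁ i + e₂ i + (cu + cv))) =
      (∑ i ∈ Finset.range n, e₁ i) + (∑ i ∈ Finset.range n, e₂ i) + n * (cu + cv) := by
    rw [Finset.sum_add_distrib, Finset.sum_add_distrib, Finset.sum_const, Finset.card_range,
      nsmul_eq_mul]
  have hrhs : (∑ i ∈ Finset.range n, e₁ i)/n + (∑ i ∈ Finset.range n, e₂ i)/n + cu + cv =
      ((∑ i ∈ Finset.range n, e₁ i) + (∑ i ∈ Finset.range n, e₂ i) + n * (cu + cv))/(n:ℝ) := by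
    field_simp
    ring
  rw [div_sub_div_same, abs_div, Nat.abs_cast, hrhs]
  gcongr
  rw [← hsum]; exact key

lemma div_div_nat (s t : ℝ) (n : ℕ) (hs : n = 0 → s = 0) : (s / n) / (t / n) = s / t := by
  rcases Nat.eq_zero_or_pos n with h | h
  · simp [h, hs h]
  rcases eq_or_ne t 0 with ht | ht
  · simp [ht]
  have hn : (n:ℝ) ≠ 0 := by positivity
  field_simp

end Arith

theorem crrr_estimators_consistent {Ω : Type*} [MeasureSpace Ω]
    [IsProbabilityMeasure (ℙ : Measure Ω)]
    (U V : ℕ → Ω → ℝ) (hUmeas : ∀ i, Measurable (U i)) (hVmeas : ∀ i, Measurable (V i))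
    (hrange : ∀ i ω, U i ω ∈ Set.Icc (0 : ℝ) 1 ∧ V i ω ∈ Set.Icc (0 : ℝ) 1)
    (hindep : iIndepFun (fun i ω => (U i ω, V i ω)) ℙ)
    (hident : ∀ i, IdentDistrib (fun ω => (U i ω, V i ω)) (fun ω => (U 0 ω, V 0 ω)) ℙ ℙ)
    (hEU : ∫ ω, U 0 ω ∂ℙ = 1 / 2) (hEV : ∫ ω, V 0 ω ∂ℙ = 1 / 2)
    (hVarU : ∫ ω, ((U 0 ω - 1 / 2) ^ 2) ∂ℙ = 1 / 12)
    (hVarV : ∫ ω, ((V 0 ω - 1 / 2) ^ 2) ∂ℙ = 1 / 12)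
    (ρC : ℝ) (hρC : ρC = 12 * ∫ ω, ((U 0 ω - 1 / 2) * (V 0 ω - 1 / 2)) ∂ℙ)
    (Uhat Vhat : ℕ → ℕ → Ω → ℝ)
    (hhatrange : ∀ n i ω, Uhat n i ω ∈ Set.Icc (0 : ℝ) 1 ∧ Vhat n i ω ∈ Set.Icc (0 : ℝ) 1)
    (hUerr : ∀ ε > (0 : ℝ), Tendsto (fun (n : ℕ) =>
      ℙ {ω | ε < (∑ i ∈ Finset.range n, |Uhat n i ω - U i ω|) / n}) atTop (𝓝 0))
    (hVerr : ∀ ε > (0 : ℝ), Tendsto (fun (n : ℕ) =>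
      ℙ {ω | ε < (∑ i ∈ Finset.range n, |Vhat n i ω - V i ω|) / n}) atTop (𝓝 0)) :
    (∀ ε > (0 : ℝ), Tendsto (fun (n : ℕ) =>
      ℙ {ω | ε < |(∑ i ∈ Finset.range n,
            (Uhat n i ω - (∑ j ∈ Finset.range n, Uhat n j ω) / n) *
              (Vhat n i ω - (∑ j ∈ Finset.range n, Vhat n j ω) / n)) /
          (∑ i ∈ Finset.range n,
            (Vhat n i ω - (∑ j ∈ Finset.range n, Vhat n j ω) / n) ^ 2) - ρC|})
      atTop (𝓝 0)) ∧
    (∀ ε > (0 : ℝ), Tendsto (fun (n : ℕ) =>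
      ℙ {ω | ε < |(∑ i ∈ Finset.range n,
            (Uhat n i ω - (∑ j ∈ Finset.range n, Uhat n j ω) / n) *
              (Vhat n i ω - (∑ j ∈ Finset.range n, Vhat n j ω) / n)) /
          Real.sqrt ((∑ i ∈ Finset.range n,
              (Uhat n i ω - (∑ j ∈ Finset.range n, Uhat n j ω) / n) ^ 2) *
            (∑ i ∈ Finset.range n,
              (Vhat n i ω - (∑ j ∈ Finset.range n, Vhat n j ω) / n) ^ 2)) - ρC|})
      atTop (𝓝 0)) ∧
    (∀ ε > (0 : ℝ), Tendsto (fun (n : ℕ) =>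
      ℙ {ω | ε < |(12 / (n : ℝ)) * (∑ i ∈ Finset.range n,
          (Uhat n i ω - 1 / 2) * (Vhat n i ω - 1 / 2)) - ρC|}) atTop (𝓝 0)) := by
  have pairmeas : ∀ i, Measurable (fun ω => (U i ω, V i ω)) :=
    fun i => (hUmeas i).prodMk (hVmeas i)
  -- generic strong law for functions of the pair
  have slln : ∀ (φ : ℝ × ℝ → ℝ), Measurable φ → (∀ ω, |φ (U 0 ω, V 0 ω)| ≤ 1) →
      TP (fun n ω => (∑ i ∈ Finset.range n, φ (U i ω, V i ω)) / n)
        (∫ ω, φ (U 0 ω, V 0 ω) ∂ℙ) := by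
    intro φ hφ hbd
    have hint : Integrable (fun ω => φ (U 0 ω, V 0 ω)) ℙ := by
      refine ⟨(hφ.comp (pairmeas 0)).aestronglyMeasurable, ?_⟩
      apply HasFiniteIntegral.of_bounded (C := 1)
      exact ae_of_all _ fun ω => by simpa [Real.norm_eq_abs] using hbd ω
    have hind : Pairwise (Function.onFun (IndepFun · · ℙ) fun i ω => φ (U i ω, V i ω)) := by
      intro i j hij
      exact (hindep.indepFun hij).comp hφ hφ
    have hidd : ∀ i, IdentDistrib (fun ω => φ (U i ω, V i ω))
        (fun ω => φ (U 0 ω, V 0 ω)) ℙ ℙ := fun i => (hident i).comp hφ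
    have hae := strong_law_ae_real (μ := ℙ) (fun i ω => φ (U i ω, V i ω)) hint hind hidd
    exact TP_of_ae (fun n => ((Finset.measurable_sum _
      (fun i _ => hφ.comp (pairmeas i))).div_const _).aestronglyMeasurable) hae
  -- the four basic sample means
  have hmU : TP (fun n ω => (∑ i ∈ Finset.range n, U i ω) / n) (1/2) := by
    have h := slln (fun p => p.1) measurable_fst (fun ω => by
      obtain ⟨hU, _⟩ := hrange 0 ω
      rw [abs_le]; exact ⟨by linarith [hU.1], by linarith [hU.2]⟩)
    rw [hEU] at h
    exact h
  have hmV : TP (fun n ω => (∑ i ∈ Finset.range n, V i ω) / n) (1/2) := by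
    have h := slln (fun p => p.2) measurable_snd (fun ω => by
      obtain ⟨_, hV⟩ := hrange 0 ω
      rw [abs_le]; exact ⟨by linarith [hV.1], by linarith [hV.2]⟩)
    rw [hEV] at h
    exact h
  have hDc : TP (fun n ω => (∑ i ∈ Finset.range n,
      (U i ω - 1/2) * (V i ω - 1/2)) / n) (ρC / 12) := by
    have h := slln (fun p => (p.1 - 1/2) * (p.2 - 1/2)) (by fun_prop) (fun ω => by
      obtain ⟨hU, hV⟩ := hrange 0 ω
      rw [abs_le]
      exact ⟨by nlinarith [hU.1, hU.2, hV.1, hV.2], by nlinarith [hU.1, hU.2, hV.1, hV.2]⟩)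
    have hval : (∫ ω, (U 0 ω - 1/2) * (V 0 ω - 1/2) ∂ℙ) = ρC / 12 := by
      rw [hρC]; ring
    rw [hval] at h
    exact h
  have hDu : TP (fun n ω => (∑ i ∈ Finset.range n,
      (U i ω - 1/2) * (U i ω - 1/2)) / n) (1/12) := by
    have h := slln (fun p => (p.1 - 1/2) * (p.1 - 1/2)) (by fun_prop) (fun ω => by
      obtain ⟨hU, _⟩ := hrange 0 ω
      rw [abs_le]
      exact ⟨by nlinarith [hU.1, hU.2], by nlinarith [hU.1, hU.2]⟩)
    have hval : (∫ ω, (U 0 ω - 1/2) * (U 0 ω - 1/2) ∂ℙ) = 1/12 := by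
      rw [← hVarU]; congr 1; funext ω; ring
    rw [hval] at h
    exact h
  have hDv : TP (fun n ω => (∑ i ∈ Finset.range n,
      (V i ω - 1/2) * (V i ω - 1/2)) / n) (1/12) := by
    have h := slln (fun p => (p.2 - 1/2) * (p.2 - 1/2)) (by fun_prop) (fun ω => by
      obtain ⟨_, hV⟩ := hrange 0 ω
      rw [abs_le]
      exact ⟨by nlinarith [hV.1, hV.2], by nlinarith [hV.1, hV.2]⟩)
    have hval : (∫ ω, (V 0 ω - 1/2) * (V 0 ω - 1/2) ∂ℙ) = 1/12 := by
      rw [← hVarV]; congr 1; funext ω; ring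
    rw [hval] at h
    exact h
  -- error averages tend to 0 in probability
  have hEUtp : TP (fun n ω => (∑ i ∈ Finset.range n, |Uhat n i ω - U i ω|) / n) 0 := by
    intro ε hε
    refine meas_tendsto_zero_mono ?_ (hUerr ε hε)
    intro n ω hω
    simp only [Set.mem_setOf_eq, sub_zero] at hω ⊢
    have hnn : (0:ℝ) ≤ (∑ i ∈ Finset.range n, |Uhat n i ω - U i ω|) / n :=
      div_nonneg (Finset.sum_nonneg fun i _ => abs_nonneg _) (Nat.cast_nonneg n)
    rwa [abs_of_nonneg hnn] at hω
  have hEVtp : TP (fun n ω => (∑ i ∈ Finset.range n, |Vhat n i ω - V i ω|) / n) 0 := by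
    intro ε hε
    refine meas_tendsto_zero_mono ?_ (hVerr ε hε)
    intro n ω hω
    simp only [Set.mem_setOf_eq, sub_zero] at hω ⊢
    have hnn : (0:ℝ) ≤ (∑ i ∈ Finset.range n, |Vhat n i ω - V i ω|) / n :=
      div_nonneg (Finset.sum_nonneg fun i _ => abs_nonneg _) (Nat.cast_nonneg n)
    rwa [abs_of_nonneg hnn] at hω
  -- hat sample means
  have hmUh : TP (fun n ω => (∑ j ∈ Finset.range n, Uhat n j ω) / n) (1/2) :=
    TP_squeeze hmU hEUtp fun n ω => avg_abs_sub_le n _ _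
  have hmVh : TP (fun n ω => (∑ j ∈ Finset.range n, Vhat n j ω) / n) (1/2) :=
    TP_squeeze hmV hEVtp fun n ω => avg_abs_sub_le n _ _
  have hcu : TP (fun n ω => |(∑ j ∈ Finset.range n, Uhat n j ω) / n - 1/2|) 0 := by
    have h := TP_comp (fun x => |x - 1/2|)
      ((continuous_abs.comp (continuous_id.sub continuous_const)).continuousAt) hmUh
    exact TP_congr_c (by norm_num) h
  have hcv : TP (fun n ω => |(∑ j ∈ Finset.range n, Vhat n j ω) / n - 1/2|) 0 := by
    have h := TP_comp (fun x => |x - 1/2|)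
      ((continuous_abs.comp (continuous_id.sub continuous_const)).continuousAt) hmVh
    exact TP_congr_c (by norm_num) h
  -- the three hat statistics (averaged forms)
  have hCh : TP (fun n ω => (∑ i ∈ Finset.range n,
      (Uhat n i ω - (∑ j ∈ Finset.range n, Uhat n j ω) / n) *
        (Vhat n i ω - (∑ j ∈ Finset.range n, Vhat n j ω) / n)) / n) (ρC / 12) := by
    refine TP_squeeze hDc (TP_congr_c (by norm_num)
      (TP_add (TP_add (TP_add hEUtp hEVtp) hcu) hcv)) fun n ω => ?_
    refine avg_prod_diff n
      (fun i => Uhat n i ω - (∑ j ∈ Finset.range n, Uhat n j ω) / n)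
      (fun i => Vhat n i ω - (∑ j ∈ Finset.range n, Vhat n j ω) / n)
      (fun i => U i ω - 1/2) (fun i => V i ω - 1/2)
      (fun i => |Uhat n i ω - U i ω|) (fun i => |Vhat n i ω - V i ω|)
      (|(∑ j ∈ Finset.range n, Uhat n j ω) / n - 1/2|)
      (|(∑ j ∈ Finset.range n, Vhat n j ω) / n - 1/2|)
      (abs_nonneg _) (abs_nonneg _) ?_ ?_ ?_ ?_
    · intro i _
      exact abs_sub_le_one' (hhatrange n i ω).2
        (avg_mem_Icc n _ fun j _ => (hhatrange n j ω).2)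
    · intro i _
      exact abs_sub_le_one' (hrange i ω).1 ⟨by norm_num, by norm_num⟩
    · intro i _
      have e : Uhat n i ω - (∑ j ∈ Finset.range n, Uhat n j ω) / n - (U i ω - 1/2)
          = (Uhat n i ω - U i ω) - ((∑ j ∈ Finset.range n, Uhat n j ω) / n - 1/2) := by ring
      rw [e]; exact abs_sub'' _ _
    · intro i _
      have e : Vhat n i ω - (∑ j ∈ Finset.range n, Vhat n j ω) / n - (V i ω - 1/2)
          = (Vhat n i ω - V i ω) - ((∑ j ∈ Finset.range n, Vhat n j ω) / n - 1/2) := by ring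
      rw [e]; exact abs_sub'' _ _
  have hAh : TP (fun n ω => (∑ i ∈ Finset.range n,
      (Uhat n i ω - (∑ j ∈ Finset.range n, Uhat n j ω) / n) *
        (Uhat n i ω - (∑ j ∈ Finset.range n, Uhat n j ω) / n)) / n) (1/12) := by
    refine TP_squeeze hDu (TP_congr_c (by norm_num)
      (TP_add (TP_add (TP_add hEUtp hEUtp) hcu) hcu)) fun n ω => ?_
    refine avg_prod_diff n
      (fun i => Uhat n i ω - (∑ j ∈ Finset.range n, Uhat n j ω) / n)
      (fun i => Uhat n i ω - (∑ j ∈ Finset.range n, Uhat n j ω) / n)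
      (fun i => U i ω - 1/2) (fun i => U i ω - 1/2)
      (fun i => |Uhat n i ω - U i ω|) (fun i => |Uhat n i ω - U i ω|)
      (|(∑ j ∈ Finset.range n, Uhat n j ω) / n - 1/2|)
      (|(∑ j ∈ Finset.range n, Uhat n j ω) / n - 1/2|)
      (abs_nonneg _) (abs_nonneg _) ?_ ?_ ?_ ?_ <;>
    · intro i _
      first
      | exact abs_sub_le_one' (hhatrange n i ω).1
          (avg_mem_Icc n _ fun j _ => (hhatrange n j ω).1)
      | exact abs_sub_le_one' (hrange i ω).1 ⟨by norm_num, by norm_num⟩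
      | · have e : Uhat n i ω - (∑ j ∈ Finset.range n, Uhat n j ω) / n - (U i ω - 1/2)
              = (Uhat n i ω - U i ω) - ((∑ j ∈ Finset.range n, Uhat n j ω) / n - 1/2) := by ring
          rw [e]; exact abs_sub'' _ _
  have hBh : TP (fun n ω => (∑ i ∈ Finset.range n,
      (Vhat n i ω - (∑ j ∈ Finset.range n, Vhat n j ω) / n) *
        (Vhat n i ω - (∑ j ∈ Finset.range n, Vhat n j ω) / n)) / n) (1/12) := by
    refine TP_squeeze hDv (TP_congr_c (by norm_num)
      (TP_add (TP_add (TP_add hEVtp hEVtp) hcv) hcv)) fun n ω => ?_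
    refine avg_prod_diff n
      (fun i => Vhat n i ω - (∑ j ∈ Finset.range n, Vhat n j ω) / n)
      (fun i => Vhat n i ω - (∑ j ∈ Finset.range n, Vhat n j ω) / n)
      (fun i => V i ω - 1/2) (fun i => V i ω - 1/2)
      (fun i => |Vhat n i ω - V i ω|) (fun i => |Vhat n i ω - V i ω|)
      (|(∑ j ∈ Finset.range n, Vhat n j ω) / n - 1/2|)
      (|(∑ j ∈ Finset.range n, Vhat n j ω) / n - 1/2|)
      (abs_nonneg _) (abs_nonneg _) ?_ ?_ ?_ ?_ <;>
    · intro i _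
      first
      | exact abs_sub_le_one' (hhatrange n i ω).2
          (avg_mem_Icc n _ fun j _ => (hhatrange n j ω).2)
      | exact abs_sub_le_one' (hrange i ω).2 ⟨by norm_num, by norm_num⟩
      | · have e : Vhat n i ω - (∑ j ∈ Finset.range n, Vhat n j ω) / n - (V i ω - 1/2)
              = (Vhat n i ω - V i ω) - ((∑ j ∈ Finset.range n, Vhat n j ω) / n - 1/2) := by ring
          rw [e]; exact abs_sub'' _ _
  have hRh : TP (fun n ω => (∑ i ∈ Finset.range n,
      (Uhat n i ω - 1/2) * (Vhat n i ω - 1/2)) / n) (ρC / 12) := by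
    refine TP_squeeze hDc (TP_congr_c (by norm_num)
      (TP_add (TP_add (TP_add hEUtp hEVtp) (TP_const 0)) (TP_const 0))) fun n ω => ?_
    refine avg_prod_diff n
      (fun i => Uhat n i ω - 1/2) (fun i => Vhat n i ω - 1/2)
      (fun i => U i ω - 1/2) (fun i => V i ω - 1/2)
      (fun i => |Uhat n i ω - U i ω|) (fun i => |Vhat n i ω - V i ω|)
      0 0 le_rfl le_rfl ?_ ?_ ?_ ?_
    · intro i _
      exact abs_sub_le_one' (hhatrange n i ω).2 ⟨by norm_num, by norm_num⟩
    · intro i _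
      exact abs_sub_le_one' (hrange i ω).1 ⟨by norm_num, by norm_num⟩
    · intro i _
      have e : Uhat n i ω - 1/2 - (U i ω - 1/2) = Uhat n i ω - U i ω := by ring
      rw [e, add_zero]
    · intro i _
      have e : Vhat n i ω - 1/2 - (V i ω - 1/2) = Vhat n i ω - V i ω := by ring
      rw [e, add_zero]
  -- conclude
  refine ⟨?_, ?_, ?_⟩
  · -- OLS slope
    have h := TP_congr_c (show ρC / 12 / (1/12) = ρC by ring)
      (TP_div (by norm_num : (1/12 : ℝ) ≠ 0) hCh hBh)
    refine TP_congr (fun n ω => ?_) h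
    simp only [pow_two]
    exact div_div_nat _ _ n (fun h0 => by rw [h0]; simp)
  · -- sample correlation
    have hAB := TP_mul hAh hBh
    have hsq := TP_congr_c
      (show Real.sqrt ((1/12 : ℝ) * (1/12)) = 1/12 by
        rw [show ((1/12 : ℝ) * (1/12)) = (1/12)^2 by norm_num]
        exact Real.sqrt_sq (by norm_num))
      (TP_comp Real.sqrt Real.continuous_sqrt.continuousAt hAB)
    have h := TP_congr_c (show ρC / 12 / (1/12) = ρC by ring)
      (TP_div (by norm_num : (1/12 : ℝ) ≠ 0) hCh hsq)
    refine TP_congr (fun n ω => ?_) h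
    simp only [pow_two]
    have hR : (0:ℝ) ≤ ∑ i ∈ Finset.range n,
        (Uhat n i ω - (∑ j ∈ Finset.range n, Uhat n j ω) / n) *
          (Uhat n i ω - (∑ j ∈ Finset.range n, Uhat n j ω) / n) :=
      Finset.sum_nonneg fun i _ => mul_self_nonneg _
    rw [div_mul_div_comm, Real.sqrt_div (mul_nonneg hR (Finset.sum_nonneg
        fun i _ => mul_self_nonneg _)), Real.sqrt_mul_self (Nat.cast_nonneg n)]
    exact div_div_nat _ _ n (fun h0 => by rw [h0]; simp)
  · -- covariance form
    have h := TP_congr_c (show (12:ℝ) * (ρC / 12) = ρC by ring) (TP_mul (TP_const 12) hRh)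
    refine TP_congr (fun n ω => ?_) h
    ring
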